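/- Let F be a finite field, m a natural number, and v : Fin m → F a vector that is neither identically zero nor a standard unit vector (i.e., there is no k with v k = 1 and v j = 0 for j ≠ k). Then the number of pairs (r, s) with r, s : Fin m → F satisfying ∑_{j} r j * s j * v j = (∑_{j} r j * v j) * (∑_{j} s j * v j) is at most 2 * |F|^(2m − 1). Equivalently, for uniformly random r and s the sketch check passes with probability at most 2/|F|. -/

import Mathlib

theorem sum_split {m : ℕ} {F : Type*} [Fintype F] [AddCommMonoid F] (f : Fin m → F) (k : Fin m) :
    ∑ j, f j = f k + ∑ j : {j : Fin m // j ≠ k}, f j := by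
  rw [Fintype.sum_eq_add_sum_compl k f]
  congr 1
  exact Finset.sum_subtype ({k}ᶜ : Finset (Fin m)) (fun j => by simp [Finset.mem_compl]) f

theorem card_fiber {F : Type*} [Field F] [Fintype F] [DecidableEq F] {m : ℕ}
    (w : Fin m → F) (k : Fin m) (hk : w k ≠ 0) (c : F) :
    (Finset.univ.filter (fun s : Fin m → F => ∑ j, w j * s j = c)).card
      = Fintype.card F ^ (m - 1) := by
  have hcard : (Finset.univ.filter (fun s : Fin m → F => ∑ j, w j * s j = c)).card
      = Fintype.card {s : Fin m → F // ∑ j, w j * s j = c} := (Fintype.card_subtype _).symm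
  have e : {s : Fin m → F // ∑ j, w j * s j = c} ≃ ({j : Fin m // j ≠ k} → F) :=
    { toFun := fun s j => s.1 j
      invFun := fun t =>
        ⟨fun j => if h : j = k then (c - ∑ j' : {j : Fin m // j ≠ k}, w j' * t j') / w k
          else t ⟨j, h⟩, by
          rw [sum_split (fun j => w j * _) k]
          simp only [dif_pos rfl]
          have : ∀ j' : {j : Fin m // j ≠ k},
              w j' * (if h : (j' : Fin m) = k then
                (c - ∑ j' : {j : Fin m // j ≠ k}, w j' * t j') / w k else t ⟨j', h⟩)
              = w j' * t j' := fun j' => by rw [dif_neg j'.2]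
          rw [Finset.sum_congr rfl (fun j' _ => this j')]
          rw [dif_pos trivial, mul_div_assoc', mul_div_cancel_left₀ _ hk]; ring⟩
      left_inv := fun s => by
        ext j
        by_cases h : j = k
        · subst h
          simp only [dif_pos rfl]
          have hs := s.2
          rw [sum_split (fun j => w j * s.1 j) j] at hs
          rw [dif_pos trivial, div_eq_iff hk]
          linear_combination -hs
        · simp [dif_neg h]
      right_inv := fun t => by
        ext j
        simp [dif_neg j.2] }
  rw [hcard, Fintype.card_congr e, Fintype.card_fun]
  congr 1
  rw [Fintype.card_subtype_compl]  -- guess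
  simp

theorem sketch_check_sound (F : Type*) [Field F] [Fintype F] [DecidableEq F]
    (m : ℕ) (v : Fin m → F)
    (hv0 : ¬ (∀ j, v j = 0))
    (hv1 : ¬ ∃ k, v k = 1 ∧ ∀ j, j ≠ k → v j = 0) :
    (Finset.univ.filter (fun p : (Fin m → F) × (Fin m → F) =>
        ∑ j, p.1 j * p.2 j * v j = (∑ j, p.1 j * v j) * (∑ j, p.2 j * v j))).card
      ≤ 2 * Fintype.card F ^ (2 * m - 1) := by
  classical
  set q := Fintype.card F with hq
  have hm : 0 < m := by
    rcases Nat.eq_zero_or_pos m with h | h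
    · subst h; exact absurd (fun j => j.elim0) hv0
    · exact h
  -- split the count over r
  have hsplit : (Finset.univ.filter (fun p : (Fin m → F) × (Fin m → F) =>
        ∑ j, p.1 j * p.2 j * v j = (∑ j, p.1 j * v j) * (∑ j, p.2 j * v j))).card
      = ∑ r : Fin m → F, (Finset.univ.filter (fun s : Fin m → F =>
          ∑ j, r j * s j * v j = (∑ j, r j * v j) * (∑ j, s j * v j))).card := by
    rw [Finset.card_filter, Fintype.sum_prod_type]
    exact Finset.sum_congr rfl (fun r _ => (Finset.card_filter _ _).symm)
  rw [hsplit]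
  -- reformulate inner predicate
  have hiff : ∀ r s : Fin m → F,
      (∑ j, r j * s j * v j = (∑ j, r j * v j) * (∑ j, s j * v j)) ↔
      (∑ j, (v j * (r j - ∑ i, r i * v i)) * s j = 0) := by
    intro r s
    have h1 : ∑ j, (v j * (r j - ∑ i, r i * v i)) * s j
        = (∑ j, r j * s j * v j) - (∑ i, r i * v i) * (∑ j, s j * v j) := by
      rw [Finset.mul_sum, ← Finset.sum_sub_distrib]
      exact Finset.sum_congr rfl (fun j _ => by ring)
    rw [h1, sub_eq_zero]
  -- inner filters
  have hinner : ∀ r : Fin m → F,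
      Finset.univ.filter (fun s : Fin m → F =>
          ∑ j, r j * s j * v j = (∑ j, r j * v j) * (∑ j, s j * v j))
      = Finset.univ.filter (fun s : Fin m → F =>
          ∑ j, (v j * (r j - ∑ i, r i * v i)) * s j = 0) :=
    fun r => Finset.filter_congr (fun s _ => by rw [hiff])
  -- bad set
  set B : Finset (Fin m → F) :=
    Finset.univ.filter (fun r => ∀ j, v j * (r j - ∑ i, r i * v i) = 0) with hB
  -- support point
  obtain ⟨k, hvk⟩ : ∃ k, v k ≠ 0 := by
    by_contra h; push_neg at h; exact hv0 h
  -- B is contained in a hyperplane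
  obtain ⟨u, k0, hu0, huB⟩ : ∃ (u : Fin m → F) (k0 : Fin m), u k0 ≠ 0 ∧
      ∀ r ∈ B, ∑ j, u j * r j = 0 := by
    by_cases hσ : (∑ j, v j) = 1
    · have hl : ∃ l, l ≠ k ∧ v l ≠ 0 := by
        by_contra h
        push_neg at h
        exact hv1 ⟨k, by
          have := Finset.sum_eq_single k (fun j _ hj => h j hj) (fun h' => absurd (Finset.mem_univ k) h')
          rw [this] at hσ; exact hσ, h⟩
      obtain ⟨l, hlk, hvl⟩ := hl
      refine ⟨fun j => if j = k then 1 else if j = l then -1 else 0, k, by simp, ?_⟩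
      intro r hr
      rw [hB, Finset.mem_filter] at hr
      have hrk : r k = ∑ i, r i * v i := by
        have := hr.2 k
        rcases mul_eq_zero.mp this with h | h
        · exact absurd h hvk
        · exact sub_eq_zero.mp h
      have hrl : r l = ∑ i, r i * v i := by
        have := hr.2 l
        rcases mul_eq_zero.mp this with h | h
        · exact absurd h hvl
        · exact sub_eq_zero.mp h
      have hsum : ∑ j, (if j = k then (1:F) else if j = l then -1 else 0) * r j
          = ∑ j, ((if j = k then r k else 0) + (if j = l then -(r l) else 0)) := by
        refine Finset.sum_congr rfl (fun j _ => ?_)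
        by_cases h1 : j = k
        · subst h1; rw [if_pos rfl, if_pos rfl, if_neg (Ne.symm hlk)]; ring
        · rw [if_neg h1, if_neg h1]
          by_cases h2 : j = l
          · subst h2; rw [if_pos rfl, if_pos rfl]; ring
          · rw [if_neg h2, if_neg h2]; ring
      rw [hsum, Finset.sum_add_distrib, Finset.sum_ite_eq' Finset.univ k,
        Finset.sum_ite_eq' Finset.univ l]
      simp [hrk, hrl]
    · refine ⟨fun j => if j = k then 1 else 0, k, by simp, ?_⟩
      intro r hr
      rw [hB, Finset.mem_filter] at hr
      have ha : (∑ i, r i * v i) = (∑ i, r i * v i) * (∑ j, v j) := by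
        rw [Finset.mul_sum]
        refine Finset.sum_congr rfl (fun j _ => ?_)
        rcases mul_eq_zero.mp (hr.2 j) with h | h
        · rw [h]; ring
        · rw [sub_eq_zero.mp h]
      have ha0 : (∑ i, r i * v i) = 0 := by
        have h2 : (∑ i, r i * v i) * (1 - ∑ j, v j) = 0 := by linear_combination ha
        rcases mul_eq_zero.mp h2 with h | h
        · exact h
        · exact absurd (by linear_combination -h) hσ
      have hrk : r k = 0 := by
        rcases mul_eq_zero.mp (hr.2 k) with h | h
        · exact absurd h hvk
        · have := sub_eq_zero.mp h; rw [ha0] at this; exact this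
      have hs2 : ∑ j, (fun j => if j = k then (1:F) else 0) j * r j
          = ∑ j, (if j = k then r j else 0) :=
        Finset.sum_congr rfl (fun j _ => by by_cases h : j = k <;> simp [h])
      rw [hs2, Finset.sum_ite_eq' Finset.univ k r]
      simp [hrk]
  -- bound on B
  have hBcard : B.card ≤ q ^ (m - 1) := by
    have hsub : B ⊆ Finset.univ.filter (fun r => ∑ j, u j * r j = 0) :=
      fun r hr => Finset.mem_filter.mpr ⟨Finset.mem_univ r, huB r hr⟩
    exact le_of_le_of_eq (Finset.card_le_card hsub) (card_fiber u k0 hu0 0)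
  have hgood : ∀ r : Fin m → F, r ∉ B →
      (Finset.univ.filter (fun s : Fin m → F =>
        ∑ j, r j * s j * v j = (∑ j, r j * v j) * (∑ j, s j * v j))).card = q ^ (m - 1) := by
    intro r hrB
    rw [hinner r]
    rw [hB] at hrB
    simp only [Finset.mem_filter, Finset.mem_univ, true_and] at hrB
    push_neg at hrB
    obtain ⟨k', hk'⟩ := hrB
    exact card_fiber _ k' hk' 0
  have hbad : ∀ r : Fin m → F,
      (Finset.univ.filter (fun s : Fin m → F =>
        ∑ j, r j * s j * v j = (∑ j, r j * v j) * (∑ j, s j * v j))).card ≤ q ^ m := by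
    intro r
    calc (Finset.univ.filter (fun s : Fin m → F =>
          ∑ j, r j * s j * v j = (∑ j, r j * v j) * (∑ j, s j * v j))).card
        ≤ (Finset.univ : Finset (Fin m → F)).card := Finset.card_filter_le _ _
      _ = q ^ m := by rw [Finset.card_univ, Fintype.card_fun]; simp [hq]
  set f : (Fin m → F) → ℕ := fun r =>
    (Finset.univ.filter (fun s : Fin m → F =>
      ∑ j, r j * s j * v j = (∑ j, r j * v j) * (∑ j, s j * v j))).card with hf
  have hsum2 : ∑ r : Fin m → F, f r = ∑ r ∈ B, f r + ∑ r ∈ Bᶜ, f r :=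
    (Finset.sum_add_sum_compl B f).symm
  have h1 : ∑ r ∈ B, f r ≤ q ^ (m - 1) * q ^ m := by
    calc ∑ r ∈ B, f r ≤ ∑ r ∈ B, q ^ m := Finset.sum_le_sum (fun r _ => hbad r)
      _ = B.card * q ^ m := by rw [Finset.sum_const, smul_eq_mul]
      _ ≤ q ^ (m - 1) * q ^ m := Nat.mul_le_mul_right _ hBcard
  have h2 : ∑ r ∈ Bᶜ, f r ≤ q ^ m * q ^ (m - 1) := by
    calc ∑ r ∈ Bᶜ, f r = ∑ r ∈ Bᶜ, q ^ (m - 1) :=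
          Finset.sum_congr rfl (fun r hr => hgood r (Finset.mem_compl.mp hr))
      _ = Bᶜ.card * q ^ (m - 1) := by rw [Finset.sum_const, smul_eq_mul]
      _ ≤ q ^ m * q ^ (m - 1) := by
          refine Nat.mul_le_mul_right _ ?_
          calc Bᶜ.card ≤ (Finset.univ : Finset (Fin m → F)).card := Finset.card_le_univ _
            _ = q ^ m := by rw [Finset.card_univ, Fintype.card_fun]; simp [hq]
  calc ∑ r : Fin m → F, f r ≤ q ^ (m - 1) * q ^ m + q ^ m * q ^ (m - 1) := by
        rw [hsum2]; exact add_le_add h1 h2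
    _ = 2 * q ^ (2 * m - 1) := by
        rw [← pow_add, ← pow_add, (by omega : m - 1 + m = 2 * m - 1),
          (by omega : m + (m - 1) = 2 * m - 1)]
        ring
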